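/- Let M be a von Neumann algebra without central summands of type I₁ and let L : M → M be an additive map satisfying L(AB + BA) = L(A)B + AL(B) + L(B)A + BL(A) whenever AB = 0 (the case ξ = −1). Then L is an additive Jordan derivation: L(A²) = L(A)A + AL(A) for all A ∈ M. -/

import Mathlib

variable {H : Type*} [NormedAddCommGroup H] [InnerProductSpace ℂ H] [CompleteSpace H]

/-- `Z` lies in the center of the von Neumann algebra `M`. -/
def VonNeumannAlgebra.IsCentral (M : VonNeumannAlgebra H) (Z : H →L[ℂ] H) : Prop :=
  Z ∈ M ∧ ∀ A ∈ M, Z * A = A * Z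

/-- `P` is a projection (self-adjoint idempotent) in `M`. -/
def VonNeumannAlgebra.IsProjection (M : VonNeumannAlgebra H) (P : H →L[ℂ] H) : Prop :=
  P ∈ M ∧ P * P = P ∧ star P = P

/-- `Q` is a central projection of `M`. -/
def VonNeumannAlgebra.IsCentralProjection (M : VonNeumannAlgebra H) (Q : H →L[ℂ] H) : Prop :=
  M.IsCentral Q ∧ Q * Q = Q ∧ star Q = Q

/-- The core of the projection `P` (the largest central projection below `P`) is zero,
i.e. the only central projection `Q` with `Q ≤ P` (equivalently `Q * P = Q`) is `0`. -/
def VonNeumannAlgebra.CoreZero (M : VonNeumannAlgebra H) (P : H →L[ℂ] H) : Prop :=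
  ∀ Q : H →L[ℂ] H, M.IsCentralProjection Q → Q * P = Q → Q = 0

/-- The central carrier of the projection `P` (the smallest central projection above `P`)
is `1`, i.e. the only central projection `Q` with `Q * P = P` is `1`. -/
def VonNeumannAlgebra.CarrierOne (M : VonNeumannAlgebra H) (P : H →L[ℂ] H) : Prop :=
  ∀ Q : H →L[ℂ] H, M.IsCentralProjection Q → Q * P = P → Q = 1

/-- `M` has no central summand of type I₁: equivalently, `M` contains a projection
with core `0` and central carrier `1`. -/
def VonNeumannAlgebra.NoTypeI1 (M : VonNeumannAlgebra H) : Prop :=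
  ∃ P : H →L[ℂ] H, M.IsProjection P ∧ M.CoreZero P ∧ M.CarrierOne P

set_option maxHeartbeats 4000000

section Aux

omit [CompleteSpace H] in
/-- Cancel a factor of two in an additive group that is a `ℂ`-module. -/
lemma aux_halfz {x : H →L[ℂ] H} (h : x + x = 0) : x = 0 := by
  have h2 : (2:ℂ) • x = (2:ℂ) • (0 : H →L[ℂ] H) := by
    rw [two_smul, smul_zero]; exact h
  exact smul_right_injective _ (two_ne_zero) h2

/-- An orthogonal projection commutes with any operator leaving (together with its adjoint)
the subspace invariant. -/
lemma aux_proj_comm (K : Submodule ℂ H) [CompleteSpace K]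
    (T : H →L[ℂ] H) (h1 : ∀ x ∈ K, T x ∈ K) (h2 : ∀ x ∈ K, (star T) x ∈ K) :
    (K.subtypeL ∘L K.orthogonalProjection) * T = T * (K.subtypeL ∘L K.orthogonalProjection) := by
  set Q := K.subtypeL ∘L K.orthogonalProjection with hQ
  have hmem : ∀ x, Q x ∈ K := fun x => (K.orthogonalProjection x).2
  have hfix : ∀ x ∈ K, Q x = x := by
    intro x hx
    simp only [hQ, ContinuousLinearMap.comp_apply, Submodule.subtypeL_apply]
    exact Submodule.starProjection_eq_self_iff.mpr hx
  have key : ∀ S : H →L[ℂ] H, (∀ x ∈ K, S x ∈ K) → Q * (S * Q) = S * Q := by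
    intro S hS
    ext x
    exact hfix _ (hS _ (hmem x))
  have k1 := key T h1
  have k2 := key (star T) h2
  have hsa : IsSelfAdjoint Q := isSelfAdjoint_starProjection K
  have k2' : Q * (T * Q) = Q * T := by
    have h := congrArg star k2
    simp only [star_mul, star_star, hsa.star_eq, mul_assoc] at h
    exact h
  exact k2'.symm.trans k1

/-- The key density consequence of `CarrierOne`-type hypotheses: if `a` kills every
`X * p` with `X ∈ M`, then `a = 0`. -/
lemma aux_faithful (M : VonNeumannAlgebra H) (p : H →L[ℂ] H) (hpM : p ∈ M)
    (hcar : ∀ Q, M.IsCentralProjection Q → Q * p = p → Q = 1) :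
    ∀ a : H →L[ℂ] H, (∀ X ∈ M, a * (X * p) = 0) → a = 0 := by
  set S : Set H := {y | ∃ X ∈ M, ∃ h : H, X (p h) = y} with hS
  set K : Submodule ℂ H := (Submodule.span ℂ S).topologicalClosure with hK
  have hKc : IsClosed (K : Set H) := Submodule.isClosed_topologicalClosure _
  haveI : CompleteSpace K := hKc.completeSpace_coe
  have inv : ∀ T : H →L[ℂ] H, (∀ y ∈ S, T y ∈ S) → ∀ x ∈ K, T x ∈ K := by
    intro T hT x hx
    have hsp : ∀ z ∈ Submodule.span ℂ S, T z ∈ Submodule.span ℂ S := by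
      intro z hz
      induction hz using Submodule.span_induction with
      | mem y hy => exact Submodule.subset_span (hT y hy)
      | zero => simp
      | add y z _ _ hy hz => rw [map_add]; exact add_mem hy hz
      | smul c y _ hy => rw [map_smul]; exact Submodule.smul_mem _ c hy
    have h1 : T x ∈ closure (T '' (Submodule.span ℂ S : Set H)) := by
      apply image_closure_subset_closure_image T.continuous
      exact ⟨x, hx, rfl⟩
    refine closure_mono ?_ h1
    rintro _ ⟨z, hz, rfl⟩
    exact hsp z hz
  set Q := K.subtypeL ∘L K.orthogonalProjection with hQdef
  have hmem : ∀ x, Q x ∈ K := fun x => (K.orthogonalProjection x).2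
  have hfix : ∀ x ∈ K, Q x = x := by
    intro x hx
    simp only [hQdef, ContinuousLinearMap.comp_apply, Submodule.subtypeL_apply]
    exact Submodule.starProjection_eq_self_iff.mpr hx
  have hsa : IsSelfAdjoint Q := isSelfAdjoint_starProjection K
  have hQ2 : Q * Q = Q := by ext x; exact hfix _ (hmem x)
  have invM : ∀ m, m ∈ M → ∀ x ∈ K, m x ∈ K := by
    intro m hm
    apply inv
    rintro _ ⟨X, hX, h, rfl⟩
    exact ⟨m * X, mul_mem hm hX, h, rfl⟩
  have invC : ∀ T, T ∈ M.commutant → ∀ x ∈ K, T x ∈ K := by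
    intro T hT
    apply inv
    rintro _ ⟨X, hX, h, rfl⟩
    refine ⟨X, hX, T h, ?_⟩
    have h1 : X * T = T * X := VonNeumannAlgebra.mem_commutant_iff.mp hT X hX
    have h2 : p * T = T * p := VonNeumannAlgebra.mem_commutant_iff.mp hT p hpM
    have h3 : X * (p * T) = T * (X * p) := by rw [h2, ← mul_assoc, h1, mul_assoc]
    calc X (p (T h)) = (X * (p * T)) h := rfl
    _ = (T * (X * p)) h := by rw [h3]
    _ = T (X (p h)) := rfl
  have hQcomm : ∀ T, T ∈ M.commutant → Q * T = T * Q := by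
    intro T hT
    exact aux_proj_comm K T (invC T hT) (invC (star T) (star_mem hT))
  have hQM : Q ∈ M := by
    rw [← M.commutant_commutant, VonNeumannAlgebra.mem_commutant_iff]
    intro g hg
    exact (hQcomm g hg).symm
  have hQcentral : ∀ A, A ∈ M → Q * A = A * Q := by
    intro A hA
    exact aux_proj_comm K A (invM A hA) (invM (star A) (star_mem hA))
  have hQp : Q * p = p := by
    ext x
    exact hfix (p x) (Submodule.le_topologicalClosure _
      (Submodule.subset_span (show p x ∈ S from ⟨1, one_mem M, x, by simp⟩)))
  have hQ1 : Q = 1 := by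
    refine hcar Q ?_ hQp
    unfold VonNeumannAlgebra.IsCentralProjection VonNeumannAlgebra.IsCentral
    exact ⟨⟨hQM, hQcentral⟩, hQ2, hsa.star_eq⟩
  intro a ha
  have hzero : ∀ z ∈ Submodule.span ℂ S, a z = 0 := by
    intro z hz
    induction hz using Submodule.span_induction with
    | mem y hy =>
      obtain ⟨X, hX, h, rfl⟩ := hy
      calc a (X (p h)) = (a * (X * p)) h := rfl
      _ = 0 := by rw [ha X hX]; rfl
    | zero => simp
    | add y z _ _ hy hz => rw [map_add, hy, hz, add_zero]
    | smul c y _ hy => rw [map_smul, hy, smul_zero]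
  ext x
  have hQx : Q x = x := by rw [hQ1]; rfl
  have hxK : x ∈ K := hQx ▸ hmem x
  have h1 : a x ∈ closure (a '' (Submodule.span ℂ S : Set H)) :=
    image_closure_subset_closure_image a.continuous ⟨x, hxK, rfl⟩
  have h2 : a x ∈ closure ({0} : Set H) := by
    refine closure_mono ?_ h1
    rintro _ ⟨z, hz, rfl⟩
    exact hzero z hz
  simpa using h2

/-- Left-sided version of faithfulness, by taking adjoints. -/
lemma aux_faithful_left (M : VonNeumannAlgebra H) (e : H →L[ℂ] H) (he : star e = e)
    (F : ∀ a : H →L[ℂ] H, (∀ X ∈ M, a * (X * e) = 0) → a = 0) :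
    ∀ a : H →L[ℂ] H, (∀ X ∈ M, (e * X) * a = 0) → a = 0 := by
  intro a h
  have h2 : star a = 0 := by
    apply F
    intro X hX
    have h3 := h (star X) (star_mem hX)
    calc star a * (X * e) = star ((e * star X) * a) := by
          rw [star_mul, star_mul, star_star, he]
    _ = 0 := by rw [h3, star_zero]
  have := congrArg star h2
  rwa [star_star, star_zero] at this

/-- From `CoreZero P` we get the `CarrierOne`-property for `1 - P`. -/
lemma aux_core_to_carrier (M : VonNeumannAlgebra H) (P : H →L[ℂ] H)
    (hcore : M.CoreZero P) :
    ∀ Q, M.IsCentralProjection Q → Q * (1 - P) = 1 - P → Q = 1 := by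
  intro Q hQ h
  obtain ⟨⟨hQM, hQc⟩, hQ2, hQs⟩ := hQ
  have h1 : M.IsCentralProjection (1 - Q) := by
    unfold VonNeumannAlgebra.IsCentralProjection VonNeumannAlgebra.IsCentral
    refine ⟨⟨sub_mem (one_mem M) hQM, fun A hA => ?_⟩, ?_, ?_⟩
    · rw [sub_mul, mul_sub, one_mul, mul_one, hQc A hA]
    · linear_combination (norm := noncomm_ring) hQ2
    · rw [star_sub, star_one, hQs]
  have h2 : (1 - Q) * P = 1 - Q := by
    linear_combination (norm := noncomm_ring) h
  have h3 := hcore (1 - Q) h1 h2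
  linear_combination (norm := noncomm_ring) - h3

end Aux

lemma diag_case (M : VonNeumannAlgebra H) (L : (H →L[ℂ] H) → (H →L[ℂ] H))
    (hadd : ∀ A ∈ M, ∀ B ∈ M, L (A + B) = L A + L B)
    (hcond : ∀ A ∈ M, ∀ B ∈ M, A * B = 0 →
      L (A * B + B * A) = L A * B + A * L B + L B * A + B * L A)
    (p q : H →L[ℂ] H) (hpM : p ∈ M) (hqM : q ∈ M)
    (hp2 : p*p = p) (hq2 : q*q = q) (hpq : p*q = 0) (hqp : q*p = 0) (hpq1 : p + q = 1)
    (Fq : ∀ a : H →L[ℂ] H, (∀ X ∈ M, a * (X*q) = 0) → a = 0)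
    (FqL : ∀ a : H →L[ℂ] H, (∀ X ∈ M, (q*X) * a = 0) → a = 0)
    (A B : H →L[ℂ] H) (hAM : A ∈ M) (hBM : B ∈ M)
    (hpA : p*A = A) (hAp : A*p = A) (hpB : p*B = B) (hBp : B*p = B) :
    L (A*B + B*A) = L A * B + A * L B + L B * A + B * L A := by
  have hL0 : L 0 = 0 := by
    have h := hadd 0 (zero_mem M) 0 (zero_mem M)
    rw [add_zero] at h
    exact left_eq_add.mp h
  have hAq : A*q = 0 := by rw [← hAp, mul_assoc, hpq, mul_zero]
  have hqA : q*A = 0 := by rw [← hpA, ← mul_assoc, hqp, zero_mul]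
  have hBq : B*q = 0 := by rw [← hBp, mul_assoc, hpq, mul_zero]
  have hqB : q*B = 0 := by rw [← hpB, ← mul_assoc, hqp, zero_mul]
  have l11 : ∀ C ∈ M, p*C = C → C*p = C → q * L C * q = 0 := by
    intro C hCM h1 h2
    have hCq : C*q = 0 := by rw [← h2, mul_assoc, hpq, mul_zero]
    have hqC : q*C = 0 := by rw [← h1, ← mul_assoc, hqp, zero_mul]
    have h := hcond C hCM q hqM hCq
    rw [hCq, hqC, add_zero, hL0] at h
    apply aux_halfz
    linear_combination (norm := noncomm_ring) - (q * h * q) - (q*L C)*hq2 - hq2*(L C*q)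
      - hqC*(L q*q) - (q*L q)*hCq
  have l11A := l11 A hAM hpA hAp
  have l11B := l11 B hBM hpB hBp
  have hABM : A*B ∈ M := mul_mem hAM hBM
  have hBAM : B*A ∈ M := mul_mem hBM hAM
  have hSM : A*B + B*A ∈ M := add_mem hABM hBAM
  have hS : L (A*B + B*A) = L (A*B) + L (B*A) := hadd _ hABM _ hBAM
  set T := L (A*B + B*A) - (L A * B + A * L B + L B * A + B * L A) with hTdef
  have hqTq : q * T * q = 0 := by
    have hqSq := l11 (A*B + B*A) hSM
      (by rw [mul_add, ← mul_assoc, ← mul_assoc, hpA, hpB])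
      (by rw [add_mul, mul_assoc, mul_assoc, hBp, hAp])
    rw [hTdef]
    linear_combination (norm := noncomm_ring) hqSq - (q*L A)*hBq - hqA*(L B*q)
      - (q*L B)*hAq - hqB*(L A*q)
  -- identity I for X in M_pq
  have hI : ∀ X ∈ M, p*X = X → X*q = X →
      X*T + T*X = B*L X*A + A*L X*B + B*X*L A + A*X*L B
        + (B*L X*A + A*L X*B + B*X*L A + A*X*L B) := by
    intro X hXM hpX hXq
    have hXA : X*A = 0 := by rw [← hXq, mul_assoc, hqA, mul_zero]
    have hXB : X*B = 0 := by rw [← hXq, mul_assoc, hqB, mul_zero]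
    have hXAB : X*(A*B) = 0 := by rw [← mul_assoc, hXA, zero_mul]
    have hXBA : X*(B*A) = 0 := by rw [← mul_assoc, hXB, zero_mul]
    have hBXA : B*X*A = 0 := by rw [mul_assoc, hXA, mul_zero]
    have hAXB : A*X*B = 0 := by rw [mul_assoc, hXB, mul_zero]
    have h1 := hcond X hXM (A*B) hABM hXAB
    rw [hXAB, zero_add] at h1
    have h2 := hcond X hXM B hBM hXB
    rw [hXB, zero_add] at h2
    have h3 := hcond (B*X) (mul_mem hBM hXM) A hAM hBXA
    rw [hBXA, zero_add, show A*(B*X) = A*B*X from (mul_assoc A B X).symm, h2] at h3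
    have h1' := hcond X hXM (B*A) hBAM hXBA
    rw [hXBA, zero_add] at h1'
    have h2' := hcond X hXM A hAM hXA
    rw [hXA, zero_add] at h2'
    have h3' := hcond (A*X) (mul_mem hAM hXM) B hBM hAXB
    rw [hAXB, zero_add, show B*(A*X) = B*A*X from (mul_assoc B A X).symm, h2'] at h3'
    rw [hTdef]
    linear_combination (norm := noncomm_ring) h3 - h1 + h3' - h1' + X*hS + hS*X
      + (L B)*hXA + (L A)*hXB - hXA*(L B) - hXB*(L A)
  -- q T p = 0
  have hqTp : q * T * p = 0 := by
    apply Fq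
    intro Y hYM
    have hXM : p*Y*q ∈ M := mul_mem (mul_mem hpM hYM) hqM
    have hpX : p*(p*Y*q) = p*Y*q := by rw [← mul_assoc, ← mul_assoc, hp2]
    have hXq : p*Y*q*q = p*Y*q := by rw [mul_assoc, hq2]
    have hE := hI (p*Y*q) hXM hpX hXq
    linear_combination (norm := noncomm_ring) q*hE*q - hqp*(Y*q*T*q) - (q*T*(p*Y))*hq2
      + 2*(hqB*(L (p*Y*q)*A*q)) + 2*(hqA*(L (p*Y*q)*B*q))
      + 2*(hqB*(p*Y*q*L A*q)) + 2*(hqA*(p*Y*q*L B*q))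
  -- p T p = 0
  have hpTp : p * T * p = 0 := by
    apply Fq
    intro Y hYM
    have hXM : p*Y*q ∈ M := mul_mem (mul_mem hpM hYM) hqM
    have hpX : p*(p*Y*q) = p*Y*q := by rw [← mul_assoc, ← mul_assoc, hp2]
    have hXq : p*Y*q*q = p*Y*q := by rw [mul_assoc, hq2]
    have hE := hI (p*Y*q) hXM hpX hXq
    linear_combination (norm := noncomm_ring) p*hE*q - (p*(p*Y))*hqTq*1 - (p*T*(p*Y))*hq2
      + 2*((p*B*L (p*Y*q))*hAq) + 2*((p*A*L (p*Y*q))*hBq)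
      + 2*((p*B*(p*Y))*l11A) + 2*((p*A*(p*Y))*l11B)
  -- mirror identity I' for X in M_qp
  have hI' : ∀ X ∈ M, q*X = X → X*p = X →
      T*X + X*T = L A*X*B + L B*X*A + B*L X*A + A*L X*B
        + (L A*X*B + L B*X*A + B*L X*A + A*L X*B) := by
    intro X hXM hqX hXp
    have hAX : A*X = 0 := by rw [← hqX, ← mul_assoc, hAq, zero_mul]
    have hBX : B*X = 0 := by rw [← hqX, ← mul_assoc, hBq, zero_mul]
    have hABX : (A*B)*X = 0 := by rw [mul_assoc, hBX, mul_zero]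
    have hBAX : (B*A)*X = 0 := by rw [mul_assoc, hAX, mul_zero]
    have hBXA2 : B*(X*A) = 0 := by rw [← mul_assoc, hBX, zero_mul]
    have hAXB2 : A*(X*B) = 0 := by rw [← mul_assoc, hAX, zero_mul]
    have g1 := hcond (A*B) hABM X hXM hABX
    rw [hABX, zero_add, show X*(A*B) = X*A*B from (mul_assoc X A B).symm] at g1
    have g2 := hcond A hAM X hXM hAX
    rw [hAX, zero_add] at g2
    have g3 := hcond B hBM (X*A) (mul_mem hXM hAM) hBXA2
    rw [hBXA2, zero_add, g2] at g3
    have g1' := hcond (B*A) hBAM X hXM hBAX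
    rw [hBAX, zero_add, show X*(B*A) = X*B*A from (mul_assoc X B A).symm] at g1'
    have g2' := hcond B hBM X hXM hBX
    rw [hBX, zero_add] at g2'
    have g3' := hcond A hAM (X*B) (mul_mem hXM hBM) hAXB2
    rw [hAXB2, zero_add, g2'] at g3'
    rw [hTdef]
    linear_combination (norm := noncomm_ring) g3 - g1 + g3' - g1' + X*hS + hS*X
      - (L B)*hAX - (L A)*hBX + hBX*(L A) + hAX*(L B)
  -- p T q = 0
  have hpTq : p * T * q = 0 := by
    apply FqL
    intro Y hYM
    have hXM : q*Y*p ∈ M := mul_mem (mul_mem hqM hYM) hpM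
    have hqX : q*(q*Y*p) = q*Y*p := by rw [← mul_assoc, ← mul_assoc, hq2]
    have hXp : q*Y*p*p = q*Y*p := by rw [mul_assoc, hp2]
    have hE := hI' (q*Y*p) hXM hqX hXp
    linear_combination (norm := noncomm_ring) q*hE*q - (q*T*(q*Y))*hpq - hq2*(Y*p*T*q)
      + 2*((q*L A*(q*Y*p))*hBq) + 2*((q*L B*(q*Y*p))*hAq)
      + 2*(hqB*(L (q*Y*p)*A*q)) + 2*(hqA*(L (q*Y*p)*B*q))
  have hT0 : T = 0 := by
    linear_combination (norm := noncomm_ring) hpTp + hpTq + hqTp + hqTq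
      - hpq1*(T*(p+q)) - T*hpq1
  rw [hTdef] at hT0
  exact sub_eq_zero.mp hT0

lemma offdiag_case (M : VonNeumannAlgebra H) (L : (H →L[ℂ] H) → (H →L[ℂ] H))
    (hadd : ∀ A ∈ M, ∀ B ∈ M, L (A + B) = L A + L B)
    (hcond : ∀ A ∈ M, ∀ B ∈ M, A * B = 0 →
      L (A * B + B * A) = L A * B + A * L B + L B * A + B * L A)
    (p q : H →L[ℂ] H) (hpM : p ∈ M) (hqM : q ∈ M)
    (hp2 : p*p = p) (hq2 : q*q = q) (hpq : p*q = 0) (hqp : q*p = 0) (hpq1 : p + q = 1)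
    (hJp : L p = L p * p + p * L p) (hJq : L q = L q * q + q * L q)
    (A B : H →L[ℂ] H) (hAM : A ∈ M) (hBM : B ∈ M)
    (hpA : p*A = A) (hAq : A*q = A) (hqB : q*B = B) (hBp : B*p = B) :
    L (A*B + B*A) = L A * B + A * L B + L B * A + B * L A := by
  have hL0 : L 0 = 0 := by
    have h := hadd 0 (zero_mem M) 0 (zero_mem M)
    rw [add_zero] at h
    exact left_eq_add.mp h
  have hsub : ∀ x ∈ M, ∀ y ∈ M, L (x - y) = L x - L y := by
    intro x hx y hy
    have h := hadd (x - y) (sub_mem hx hy) y hy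
    rw [sub_add_cancel] at h
    exact eq_sub_of_add_eq h.symm
  have hqA : q*A = 0 := by rw [← hpA, ← mul_assoc, hqp, zero_mul]
  have hAp : A*p = 0 := by rw [← hAq, mul_assoc, hqp, mul_zero]
  have hpB : p*B = 0 := by rw [← hqB, ← mul_assoc, hpq, zero_mul]
  have hBq : B*q = 0 := by rw [← hBp, mul_assoc, hpq, mul_zero]
  have hBB : B*B = 0 := by linear_combination (norm := noncomm_ring) B*hpB - hBp*B
  have hABM : A*B ∈ M := mul_mem hAM hBM
  have hBAM : B*A ∈ M := mul_mem hBM hAM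
  have hBABM : B*A*B ∈ M := mul_mem hBAM hBM
  have EPQ := hcond q hqM p hpM hqp
  rw [hqp, hpq, add_zero, hL0] at EPQ
  have hd1p : (L p + L q)*p + p*(L p + L q) = 0 := by
    linear_combination (norm := noncomm_ring) - EPQ - hpq1*(L p) - (L p)*hpq1 - 2*hJp
  have hd1q : (L p + L q)*q + q*(L p + L q) = 0 := by
    linear_combination (norm := noncomm_ring) - EPQ - hpq1*(L q) - (L q)*hpq1 - 2*hJq
  have hd1 : L p + L q = 0 := by
    apply aux_halfz
    linear_combination (norm := noncomm_ring) hd1p + hd1q - (L p + L q)*hpq1 - hpq1*(L p + L q)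
  have E2A := hcond q hqM A hAM hqA
  rw [hqA, zero_add, hAq] at E2A
  have hBBA : B*(B*A) = 0 := by rw [← mul_assoc, hBB, zero_mul]
  have hBAB := hcond B hBM (B*A) hBAM hBBA
  rw [hBBA, zero_add] at hBAB
  have hBAq : B*A*q = B*A := by rw [mul_assoc, hAq]
  have hBAp : B*A*p = 0 := by rw [mul_assoc, hAp, mul_zero]
  have hpBA : p*(B*A) = 0 := by rw [← mul_assoc, hpB, zero_mul]
  have D1 := hcond (B*A) hBAM p hpM hBAp
  rw [hBAp, hpBA, add_zero, hL0] at D1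
  have hXY : (q+B)*(A - B*A) = 0 := by
    linear_combination (norm := noncomm_ring) hqA - hqB*A - hBBA
  have hmain := hcond (q+B) (add_mem hqM hBM) (A - B*A) (sub_mem hAM hBAM) hXY
  have harg : (q+B)*(A - B*A) + (A - B*A)*(q+B) = A + A*B - (B*A + B*A*B) := by
    linear_combination (norm := noncomm_ring) hXY + hAq - hBAq
  rw [harg, hsub _ (add_mem hAM hABM) _ (add_mem hBAM hBABM), hadd A hAM (A*B) hABM,
    hadd (B*A) hBAM (B*A*B) hBABM, hadd q hqM B hBM, hsub A hAM (B*A) hBAM] at hmain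
  rw [hadd (A*B) hABM (B*A) hBAM]
  linear_combination (norm := noncomm_ring) hmain - E2A + hBAB - D1
    - (B*A)*hd1 - hd1*(B*A) - L (B*A)*hpq1 - hpq1*(L (B*A))

theorem neg_one_case_jordan_derivation (M : VonNeumannAlgebra H) (hM : M.NoTypeI1)
    (L : (H →L[ℂ] H) → (H →L[ℂ] H))
    (hmaps : ∀ A ∈ M, L A ∈ M)
    (hadd : ∀ A ∈ M, ∀ B ∈ M, L (A + B) = L A + L B)
    (hcond : ∀ A ∈ M, ∀ B ∈ M, A * B = 0 →
      L (A * B + B * A) = L A * B + A * L B + L B * A + B * L A) :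
    ∀ A ∈ M, L (A * A) = L A * A + A * L A := by
  obtain ⟨P, hPproj, hcore, hcar⟩ := hM
  obtain ⟨hPM, hP2, hPs⟩ := hPproj
  set q : H →L[ℂ] H := 1 - P with hqdef
  have hqM : q ∈ M := sub_mem (one_mem M) hPM
  have hq2 : q * q = q := by rw [hqdef]; linear_combination (norm := noncomm_ring) hP2
  have hpq : P * q = 0 := by rw [hqdef]; linear_combination (norm := noncomm_ring) - hP2
  have hqp : q * P = 0 := by rw [hqdef]; linear_combination (norm := noncomm_ring) - hP2
  have hpq1 : P + q = 1 := by rw [hqdef, add_sub_cancel]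
  have hpq1' : q + P = 1 := by rw [add_comm]; exact hpq1
  have hqs : star q = q := by rw [hqdef, star_sub, star_one, hPs]
  have Fp := aux_faithful M P hPM hcar
  have hcarq : ∀ Q, M.IsCentralProjection Q → Q * q = q → Q = 1 := by
    rw [hqdef]; exact aux_core_to_carrier M P hcore
  have Fq := aux_faithful M q hqM hcarq
  have FpL := aux_faithful_left M P hPs Fp
  have FqL := aux_faithful_left M q hqs Fq
  have hDp := diag_case M L hadd hcond P q hPM hqM hP2 hq2 hpq hqp hpq1 Fq FqL
    P P hPM hPM hP2 hP2 hP2 hP2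
  have hDq := diag_case M L hadd hcond q P hqM hPM hq2 hP2 hqp hpq hpq1' Fp FpL
    q q hqM hqM hq2 hq2 hq2 hq2
  have hJp : L P = L P * P + P * L P := by
    rw [hP2, hadd P hPM P hPM] at hDp
    have h := aux_halfz (x := L P - (L P * P + P * L P))
      (by linear_combination (norm := noncomm_ring) hDp)
    exact sub_eq_zero.mp h
  have hJq : L q = L q * q + q * L q := by
    rw [hq2, hadd q hqM q hqM] at hDq
    have h := aux_halfz (x := L q - (L q * q + q * L q))
      (by linear_combination (norm := noncomm_ring) hDq)
    exact sub_eq_zero.mp h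
  -- helper for swapped zero products
  have swapcase : ∀ X ∈ M, ∀ Y ∈ M, Y * X = 0 →
      L (X*Y + Y*X) = L X * Y + X * L Y + L Y * X + Y * L X := by
    intro X hX Y hY h
    have h2 := hcond Y hY X hX h
    rw [add_comm (Y*X)] at h2
    linear_combination (norm := noncomm_ring) h2
  have mm : ∀ {x y : H →L[ℂ] H}, x ∈ M → y ∈ M → x*y + y*x ∈ M :=
    fun hx hy => add_mem (mul_mem hx hy) (mul_mem hy hx)
  intro A hA
  set A1 := P*A*P with ha1
  set A2 := P*A*q with ha2
  set A3 := q*A*P with ha3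
  set A4 := q*A*q with ha4
  have hA1M : A1 ∈ M := mul_mem (mul_mem hPM hA) hPM
  have hA2M : A2 ∈ M := mul_mem (mul_mem hPM hA) hqM
  have hA3M : A3 ∈ M := mul_mem (mul_mem hqM hA) hPM
  have hA4M : A4 ∈ M := mul_mem (mul_mem hqM hA) hqM
  have hPa1 : P*A1 = A1 := by rw [ha1, ← mul_assoc, ← mul_assoc, hP2]
  have ha1P : A1*P = A1 := by rw [ha1, mul_assoc, hP2]
  have hPa2 : P*A2 = A2 := by rw [ha2, ← mul_assoc, ← mul_assoc, hP2]
  have ha2q : A2*q = A2 := by rw [ha2, mul_assoc, hq2]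
  have hqa3 : q*A3 = A3 := by rw [ha3, ← mul_assoc, ← mul_assoc, hq2]
  have ha3P : A3*P = A3 := by rw [ha3, mul_assoc, hP2]
  have hqa4 : q*A4 = A4 := by rw [ha4, ← mul_assoc, ← mul_assoc, hq2]
  have ha4q : A4*q = A4 := by rw [ha4, mul_assoc, hq2]
  -- zero products
  have z13 : A1*A3 = 0 := by
    rw [ha1, ha3]; linear_combination (norm := noncomm_ring) (P*A)*hpq*(A*P)
  have z14 : A1*A4 = 0 := by
    rw [ha1, ha4]; linear_combination (norm := noncomm_ring) (P*A)*hpq*(A*q)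
  have z21 : A2*A1 = 0 := by
    rw [ha2, ha1]; linear_combination (norm := noncomm_ring) (P*A)*hqp*(A*P)
  have z22 : A2*A2 = 0 := by
    rw [ha2]; linear_combination (norm := noncomm_ring) (P*A)*hqp*(A*q)
  have z33 : A3*A3 = 0 := by
    rw [ha3]; linear_combination (norm := noncomm_ring) (q*A)*hpq*(A*P)
  have z34 : A3*A4 = 0 := by
    rw [ha3, ha4]; linear_combination (norm := noncomm_ring) (q*A)*hpq*(A*q)
  have z41 : A4*A1 = 0 := by
    rw [ha4, ha1]; linear_combination (norm := noncomm_ring) (q*A)*hqp*(A*P)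
  have z42 : A4*A2 = 0 := by
    rw [ha4, ha2]; linear_combination (norm := noncomm_ring) (q*A)*hqp*(A*q)
  -- the sixteen identities
  have h11 := diag_case M L hadd hcond P q hPM hqM hP2 hq2 hpq hqp hpq1 Fq FqL
    A1 A1 hA1M hA1M hPa1 ha1P hPa1 ha1P
  have h12 := swapcase A1 hA1M A2 hA2M z21
  have h13 := hcond A1 hA1M A3 hA3M z13
  have h14 := hcond A1 hA1M A4 hA4M z14
  have h21 := hcond A2 hA2M A1 hA1M z21
  have h22 := hcond A2 hA2M A2 hA2M z22
  have h23 := offdiag_case M L hadd hcond P q hPM hqM hP2 hq2 hpq hqp hpq1 hJp hJq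
    A2 A3 hA2M hA3M hPa2 ha2q hqa3 ha3P
  have h24 := swapcase A2 hA2M A4 hA4M z42
  have h31 := swapcase A3 hA3M A1 hA1M z13
  have h32 := offdiag_case M L hadd hcond q P hqM hPM hq2 hP2 hqp hpq hpq1' hJq hJp
    A3 A2 hA3M hA2M hqa3 ha3P hPa2 ha2q
  have h33 := hcond A3 hA3M A3 hA3M z33
  have h34 := hcond A3 hA3M A4 hA4M z34
  have h41 := hcond A4 hA4M A1 hA1M z41
  have h42 := hcond A4 hA4M A2 hA2M z42
  have h43 := swapcase A4 hA4M A3 hA3M z34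
  have h44 := diag_case M L hadd hcond q P hqM hPM hq2 hP2 hqp hpq hpq1' Fp FpL
    A4 A4 hA4M hA4M hqa4 ha4q hqa4 ha4q
  -- sum decomposition
  have hsum : A1 + A2 + A3 + A4 = A := by
    rw [ha1, ha2, ha3, ha4]
    linear_combination (norm := noncomm_ring) hpq1*(A*(P+q)) + A*hpq1
  have hAAM : A*A ∈ M := mul_mem hA hA
  have e0 : A*A + A*A = (A1*A + A*A1) + (A2*A + A*A2) + (A3*A + A*A3) + (A4*A + A*A4) := by
    linear_combination (norm := noncomm_ring) - hsum*A - A*hsum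
  have hT1 : A1*A + A*A1 = (A1*A1 + A1*A1) + (A1*A2 + A2*A1) + (A1*A3 + A3*A1)
      + (A1*A4 + A4*A1) := by
    linear_combination (norm := noncomm_ring) - A1*hsum - hsum*A1
  have hT2 : A2*A + A*A2 = (A2*A1 + A1*A2) + (A2*A2 + A2*A2) + (A2*A3 + A3*A2)
      + (A2*A4 + A4*A2) := by
    linear_combination (norm := noncomm_ring) - A2*hsum - hsum*A2
  have hT3 : A3*A + A*A3 = (A3*A1 + A1*A3) + (A3*A2 + A2*A3) + (A3*A3 + A3*A3)
      + (A3*A4 + A4*A3) := by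
    linear_combination (norm := noncomm_ring) - A3*hsum - hsum*A3
  have hT4 : A4*A + A*A4 = (A4*A1 + A1*A4) + (A4*A2 + A2*A4) + (A4*A3 + A3*A4)
      + (A4*A4 + A4*A4) := by
    linear_combination (norm := noncomm_ring) - A4*hsum - hsum*A4
  have hbig : L (A*A) + L (A*A)
      = (L A1*A1 + A1*L A1 + L A1*A1 + A1*L A1)
      + (L A1*A2 + A1*L A2 + L A2*A1 + A2*L A1)
      + (L A1*A3 + A1*L A3 + L A3*A1 + A3*L A1)
      + (L A1*A4 + A1*L A4 + L A4*A1 + A4*L A1)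
      + ((L A2*A1 + A2*L A1 + L A1*A2 + A1*L A2)
      + (L A2*A2 + A2*L A2 + L A2*A2 + A2*L A2)
      + (L A2*A3 + A2*L A3 + L A3*A2 + A3*L A2)
      + (L A2*A4 + A2*L A4 + L A4*A2 + A4*L A2))
      + ((L A3*A1 + A3*L A1 + L A1*A3 + A1*L A3)
      + (L A3*A2 + A3*L A2 + L A2*A3 + A2*L A3)
      + (L A3*A3 + A3*L A3 + L A3*A3 + A3*L A3)
      + (L A3*A4 + A3*L A4 + L A4*A3 + A4*L A3))
      + ((L A4*A1 + A4*L A1 + L A1*A4 + A1*L A4)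
      + (L A4*A2 + A4*L A2 + L A2*A4 + A2*L A4)
      + (L A4*A3 + A4*L A3 + L A3*A4 + A3*L A4)
      + (L A4*A4 + A4*L A4 + L A4*A4 + A4*L A4)) := by
    calc L (A*A) + L (A*A) = L (A*A + A*A) := (hadd _ hAAM _ hAAM).symm
    _ = L ((A1*A + A*A1) + (A2*A + A*A2) + (A3*A + A*A3) + (A4*A + A*A4)) := by rw [e0]
    _ = L (A1*A + A*A1) + L (A2*A + A*A2) + L (A3*A + A*A3) + L (A4*A + A*A4) := by
        rw [hadd _ (add_mem (add_mem (mm hA1M hA) (mm hA2M hA)) (mm hA3M hA)) _ (mm hA4M hA),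
          hadd _ (add_mem (mm hA1M hA) (mm hA2M hA)) _ (mm hA3M hA),
          hadd _ (mm hA1M hA) _ (mm hA2M hA)]
    _ = _ := by
        rw [hT1, hT2, hT3, hT4,
          hadd _ (add_mem (add_mem (mm hA1M hA1M) (mm hA1M hA2M)) (mm hA1M hA3M)) _ (mm hA1M hA4M),
          hadd _ (add_mem (mm hA1M hA1M) (mm hA1M hA2M)) _ (mm hA1M hA3M),
          hadd _ (mm hA1M hA1M) _ (mm hA1M hA2M),
          hadd _ (add_mem (add_mem (mm hA2M hA1M) (mm hA2M hA2M)) (mm hA2M hA3M)) _ (mm hA2M hA4M),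
          hadd _ (add_mem (mm hA2M hA1M) (mm hA2M hA2M)) _ (mm hA2M hA3M),
          hadd _ (mm hA2M hA1M) _ (mm hA2M hA2M),
          hadd _ (add_mem (add_mem (mm hA3M hA1M) (mm hA3M hA2M)) (mm hA3M hA3M)) _ (mm hA3M hA4M),
          hadd _ (add_mem (mm hA3M hA1M) (mm hA3M hA2M)) _ (mm hA3M hA3M),
          hadd _ (mm hA3M hA1M) _ (mm hA3M hA2M),
          hadd _ (add_mem (add_mem (mm hA4M hA1M) (mm hA4M hA2M)) (mm hA4M hA3M)) _ (mm hA4M hA4M),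
          hadd _ (add_mem (mm hA4M hA1M) (mm hA4M hA2M)) _ (mm hA4M hA3M),
          hadd _ (mm hA4M hA1M) _ (mm hA4M hA2M),
          h11, h12, h13, h14, h21, h22, h23, h24, h31, h32, h33, h34, h41, h42, h43, h44]
  have hLA : L A = L A1 + L A2 + L A3 + L A4 := by
    rw [← hsum,
      hadd _ (add_mem (add_mem hA1M hA2M) hA3M) _ hA4M,
      hadd _ (add_mem hA1M hA2M) _ hA3M,
      hadd _ hA1M _ hA2M]
  have final2 : L (A*A) + L (A*A) = (L A * A + A * L A) + (L A * A + A * L A) := by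
    linear_combination (norm := noncomm_ring) hbig - 2*(hLA*A) - 2*(A*hLA)
      + 2*((L A1 + L A2 + L A3 + L A4)*hsum) + 2*(hsum*(L A1 + L A2 + L A3 + L A4))
  have h := aux_halfz (x := L (A*A) - (L A * A + A * L A))
    (by linear_combination (norm := noncomm_ring) final2)
  exact sub_eq_zero.mp h
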